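/- For all θ', θ'' ∈ ℝ^p, ‖∇_{θ'} M(θ') − ∇_{θ''} M(θ'')‖₂ ≤ ( L₂(1 + αL₂)^{2r} + (L₁L₃/L₂)((1 + αL₂)^{2r} − 1) ) ‖θ' − θ''‖₂. -/

import Mathlib

open MeasureTheory ProbabilityTheory Filter Asymptotics

noncomputable section

/-- `ℝ^p` with the Euclidean inner product. -/
abbrev Vec (p : ℕ) := EuclideanSpace ℝ (Fin p)

/-- One inner gradient-descent step `φ ↦ φ − α ∇_φ L^in(φ, T)`. -/
def gdStep (p : ℕ) (α : ℝ) {Ωt : Type*} (Lin : Vec p → Ωt → ℝ) (T : Ωt) (φ : Vec p) : Vec p :=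
  φ - α • gradient (fun ψ => Lin ψ T) φ

/-- The `r`-step inner gradient-descent map `U(θ, T)`. -/
def U (p : ℕ) (α : ℝ) (r : ℕ) {Ωt : Type*} (Lin : Vec p → Ωt → ℝ) (θ : Vec p) (T : Ωt) : Vec p :=
  (gdStep p α Lin T)^[r] θ

/-- Assumption 1 of the paper: `L^in(·,T), L^out(·,T)` are twice differentiable with
uniformly bounded gradients (for `L^out`) and Hessians, and the Hessian of `L^in`
is uniformly Lipschitz.  The Hessian is `fderiv ℝ (gradient ·)` and `‖·‖` on it is
the operator norm. -/
def Assumption1 (p : ℕ) {Ωt : Type*} (Lin Lout : Vec p → Ωt → ℝ) (L₁ L₂ L₃ : ℝ) : Prop :=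
  0 < L₁ ∧ 0 < L₂ ∧ 0 < L₃ ∧
  ∀ T : Ωt,
    Differentiable ℝ (fun φ => Lin φ T) ∧
    Differentiable ℝ (gradient (fun φ => Lin φ T)) ∧
    Differentiable ℝ (fun φ => Lout φ T) ∧
    Differentiable ℝ (gradient (fun φ => Lout φ T)) ∧
    (∀ φ, ‖gradient (fun ψ => Lout ψ T) φ‖ ≤ L₁) ∧
    (∀ φ, ‖fderiv ℝ (gradient (fun ψ => Lin ψ T)) φ‖ ≤ L₂) ∧
    (∀ φ, ‖fderiv ℝ (gradient (fun ψ => Lout ψ T)) φ‖ ≤ L₂) ∧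
    (∀ φ ψ, ‖fderiv ℝ (gradient (fun χ => Lin χ T)) φ
              - fderiv ℝ (gradient (fun χ => Lin χ T)) ψ‖ ≤ L₃ * ‖φ - ψ‖)

/-- The exact outer gradient `∇_θ L^out(U(θ,T), T)` of the map `θ ↦ L^out(U(θ,T),T)`. -/
def outerGrad (p : ℕ) (α : ℝ) (r : ℕ) {Ωt : Type*} (Lin Lout : Vec p → Ωt → ℝ)
    (θ : Vec p) (T : Ωt) : Vec p :=
  gradient (fun θ' => Lout (U p α r Lin θ' T) T) θ

/-- The BLO objective `M(θ) = E_{T ∼ p(T)}[L^out(U(θ,T),T)]`. -/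
def Mobj (p : ℕ) (α : ℝ) (r : ℕ) {Ωt : Type*} [MeasurableSpace Ωt] (μ : Measure Ωt)
    (Lin Lout : Vec p → Ωt → ℝ) (θ : Vec p) : ℝ :=
  ∫ T, Lout (U p α r Lin θ T) T ∂μ

/-- Assumption 2 of the paper: `M(θ)`, `∇M(θ)` and `E[∇_θ L^out(U(θ,T),T)]` are
well-defined, `∇M(θ) = E[∇_θ L^out(U(θ,T),T)]`, and `M* = inf M > −∞`. -/
def Assumption2 (p : ℕ) (α : ℝ) (r : ℕ) {Ωt : Type*} [MeasurableSpace Ωt] (μ : Measure Ωt)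
    (Lin Lout : Vec p → Ωt → ℝ) : Prop :=
  (∀ θ, Integrable (fun T => Lout (U p α r Lin θ T) T) μ) ∧
  (∀ θ T, DifferentiableAt ℝ (fun θ' => Lout (U p α r Lin θ' T) T) θ) ∧
  (∀ θ, Integrable (fun T => outerGrad p α r Lin Lout θ T) μ) ∧
  (∀ θ, DifferentiableAt ℝ (Mobj p α r μ Lin Lout) θ) ∧
  (∀ θ, gradient (Mobj p α r μ Lin Lout) θ = ∫ T, outerGrad p α r Lin Lout θ T ∂μ) ∧
  BddBelow (Set.range (Mobj p α r μ Lin Lout))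

/-- The UFO-BLO gradient estimator
`G(θ,T,x) = ∇_{φ_r} L^out(φ_r,T) + (x/q)(∇_θ L^out(φ_r,T) − ∇_{φ_r} L^out(φ_r,T))`. -/
def Gest (p : ℕ) (α : ℝ) (r : ℕ) (q : ℝ) {Ωt : Type*} (Lin Lout : Vec p → Ωt → ℝ)
    (θ : Vec p) (T : Ωt) (x : ℝ) : Vec p :=
  gradient (fun φ => Lout φ T) (U p α r Lin θ T)
    + (x / q) • (outerGrad p α r Lin Lout θ T
                  - gradient (fun φ => Lout φ T) (U p α r Lin θ T))

/-- The `Bernoulli(q)` distribution on `Bool`. -/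
def bern (q : ℝ) : Measure Bool :=
  (ENNReal.ofReal q) • Measure.dirac true + (ENNReal.ofReal (1 - q)) • Measure.dirac false


set_option maxHeartbeats 1000000

lemma lip_of_fderiv_bound {E F : Type*} [NormedAddCommGroup E] [NormedSpace ℝ E]
    [NormedAddCommGroup F] [NormedSpace ℝ F]
    {f : E → F} (hf : Differentiable ℝ f) {C : ℝ}
    (hC : ∀ x, ‖fderiv ℝ f x‖ ≤ C) (x y : E) : ‖f x - f y‖ ≤ C * ‖x - y‖ :=
  (convex_univ).norm_image_sub_le_of_norm_fderiv_le (fun z _ => hf z) (fun z _ => hC z)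
    (Set.mem_univ y) (Set.mem_univ x)

lemma iterate_facts (p : ℕ) (α : ℝ) (hα : 0 < α) {Ωt : Type*}
    (Lin : Vec p → Ωt → ℝ) (T : Ωt) (L₂ L₃ : ℝ) (hL₂ : 0 < L₂) (hL₃ : 0 < L₃)
    (hdG : Differentiable ℝ (gradient (fun φ => Lin φ T)))
    (hH : ∀ φ, ‖fderiv ℝ (gradient (fun ψ => Lin ψ T)) φ‖ ≤ L₂)
    (hHlip : ∀ φ ψ, ‖fderiv ℝ (gradient (fun χ => Lin χ T)) φ
        - fderiv ℝ (gradient (fun χ => Lin χ T)) ψ‖ ≤ L₃ * ‖φ - ψ‖)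
    (n : ℕ) :
    Differentiable ℝ (fun θ => U p α n Lin θ T) ∧
    (∀ θ, ‖fderiv ℝ (fun θ' => U p α n Lin θ' T) θ‖ ≤ (1 + α*L₂)^n) ∧
    (∀ θ θ', ‖fderiv ℝ (fun θ'' => U p α n Lin θ'' T) θ
        - fderiv ℝ (fun θ'' => U p α n Lin θ'' T) θ'‖
        ≤ (L₃/L₂) * ((1 + α*L₂)^(2*n) - 1) * ‖θ - θ'‖) := by
  set G := gradient (fun φ => Lin φ T) with hG
  set S := gdStep p α Lin T with hSdef
  set b := 1 + α*L₂ with hbdef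
  have hb1 : 1 ≤ b := by nlinarith
  have hb0 : 0 < b := by linarith
  set c := L₃ / L₂ with hcdef
  have hc0 : 0 < c := div_pos hL₃ hL₂
  have hcL : L₃ = c * L₂ := by rw [hcdef, div_mul_cancel₀ _ hL₂.ne']
  have hSd : Differentiable ℝ S := by
    intro φ
    exact (differentiableAt_fun_id.sub ((hdG φ).const_smul α))
  have hfS : ∀ φ, fderiv ℝ S φ = ContinuousLinearMap.id ℝ (Vec p) - α • fderiv ℝ G φ := by
    intro φ
    have h1 : fderiv ℝ (fun x : Vec p => x - α • G x) φ
        = fderiv ℝ (fun x : Vec p => x) φ - fderiv ℝ (fun x => α • G x) φ :=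
      fderiv_fun_sub differentiableAt_fun_id ((hdG φ).const_smul α)
    have h2 : fderiv ℝ (fun x => α • G x) φ = α • fderiv ℝ G φ := fderiv_fun_const_smul (hdG φ) α
    show fderiv ℝ (fun x : Vec p => x - α • G x) φ = _
    simpa [hSdef, gdStep, fderiv_id', h2] using h1
  have hfSb : ∀ φ, ‖fderiv ℝ S φ‖ ≤ b := by
    intro φ
    rw [hfS φ]
    calc ‖ContinuousLinearMap.id ℝ (Vec p) - α • fderiv ℝ G φ‖
        ≤ ‖ContinuousLinearMap.id ℝ (Vec p)‖ + ‖α • fderiv ℝ G φ‖ := norm_sub_le _ _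
      _ ≤ 1 + α * L₂ := by
          gcongr
          · exact ContinuousLinearMap.norm_id_le
          · rw [norm_smul, Real.norm_eq_abs, abs_of_pos hα]
            exact mul_le_mul_of_nonneg_left (hH φ) hα.le
  have hfSlip : ∀ φ ψ, ‖fderiv ℝ S φ - fderiv ℝ S ψ‖ ≤ α * L₃ * ‖φ - ψ‖ := by
    intro φ ψ
    rw [hfS φ, hfS ψ]
    have : ContinuousLinearMap.id ℝ (Vec p) - α • fderiv ℝ G φ
        - (ContinuousLinearMap.id ℝ (Vec p) - α • fderiv ℝ G ψ)
        = α • (fderiv ℝ G ψ - fderiv ℝ G φ) := by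
      rw [smul_sub]; abel
    rw [this, norm_smul, Real.norm_eq_abs, abs_of_pos hα, mul_assoc]
    refine mul_le_mul_of_nonneg_left ?_ hα.le
    have := hHlip ψ φ
    rwa [norm_sub_rev ψ φ] at this
  have hSlip : ∀ φ ψ, ‖S φ - S ψ‖ ≤ b * ‖φ - ψ‖ := lip_of_fderiv_bound hSd hfSb
  induction n with
  | zero =>
    refine ⟨differentiable_id, ?_, ?_⟩
    · intro θ
      simp only [U, Function.iterate_zero, id]
      rw [fderiv_id', pow_zero]
      exact ContinuousLinearMap.norm_id_le
    · intro θ θ'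
      simp only [U, Function.iterate_zero, id, fderiv_id', sub_self, norm_zero, mul_zero,
        pow_zero, Nat.mul_zero, sub_self, mul_zero, zero_mul]
      exact le_refl 0
  | succ n ih =>
    obtain ⟨ihd, ihb, ihlip⟩ := ih
    have hUlip : ∀ θ θ', ‖U p α n Lin θ T - U p α n Lin θ' T‖ ≤ b^n * ‖θ - θ'‖ :=
      lip_of_fderiv_bound ihd ihb
    have hcomp : (fun θ => U p α (n+1) Lin θ T) = S ∘ (fun θ => U p α n Lin θ T) := by
      funext θ
      simp [U, Function.iterate_succ_apply', hSdef]
    have hd' : Differentiable ℝ (fun θ => U p α (n+1) Lin θ T) := by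
      rw [hcomp]; exact hSd.comp ihd
    have hfU : ∀ θ, fderiv ℝ (fun θ' => U p α (n+1) Lin θ' T) θ
        = (fderiv ℝ S (U p α n Lin θ T)).comp (fderiv ℝ (fun θ' => U p α n Lin θ' T) θ) := by
      intro θ
      rw [hcomp]
      exact fderiv_comp θ (hSd _) (ihd θ)
    refine ⟨hd', ?_, ?_⟩
    · intro θ
      rw [hfU θ]
      calc ‖(fderiv ℝ S (U p α n Lin θ T)).comp (fderiv ℝ (fun θ' => U p α n Lin θ' T) θ)‖
          ≤ ‖fderiv ℝ S (U p α n Lin θ T)‖ * ‖fderiv ℝ (fun θ' => U p α n Lin θ' T) θ‖ :=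
            ContinuousLinearMap.opNorm_comp_le _ _
        _ ≤ b * b^n :=
            mul_le_mul (hfSb _) (ihb θ) (norm_nonneg _) hb0.le
        _ = b^(n+1) := by rw [pow_succ, mul_comm]
    · intro θ θ'
      rw [hfU θ, hfU θ']
      set A := fderiv ℝ S (U p α n Lin θ T)
      set A' := fderiv ℝ S (U p α n Lin θ' T)
      set B := fderiv ℝ (fun θ'' => U p α n Lin θ'' T) θ
      set B' := fderiv ℝ (fun θ'' => U p α n Lin θ'' T) θ'
      have key : ‖A.comp B - A'.comp B'‖ ≤ ‖A - A'‖ * ‖B‖ + ‖A'‖ * ‖B - B'‖ := by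
        calc ‖A.comp B - A'.comp B'‖
            = ‖(A - A').comp B + A'.comp (B - B')‖ := by
              congr 1
              ext v
              simp [ContinuousLinearMap.sub_comp, ContinuousLinearMap.comp_sub]
          _ ≤ ‖(A - A').comp B‖ + ‖A'.comp (B - B')‖ := norm_add_le _ _
          _ ≤ ‖A - A'‖ * ‖B‖ + ‖A'‖ * ‖B - B'‖ := by
              gcongr <;> exact ContinuousLinearMap.opNorm_comp_le _ _
      have h1 : ‖A - A'‖ ≤ α * L₃ * (b^n * ‖θ - θ'‖) :=
        (hfSlip _ _).trans (by
          have := hUlip θ θ'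
          nlinarith [mul_pos hα hL₃])
      have h2 : ‖B‖ ≤ b^n := ihb θ
      have h3 : ‖A'‖ ≤ b := hfSb _
      have h4 : ‖B - B'‖ ≤ c * (b^(2*n) - 1) * ‖θ - θ'‖ := ihlip θ θ'
      have hBnn : (0:ℝ) ≤ ‖B‖ := norm_nonneg _
      have hA'nn : (0:ℝ) ≤ ‖A'‖ := norm_nonneg _
      have hbn : (1:ℝ) ≤ b^n := one_le_pow₀ hb1
      have hb2n : (1:ℝ) ≤ b^(2*n) := one_le_pow₀ hb1
      have hnn : (0:ℝ) ≤ ‖θ - θ'‖ := norm_nonneg _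
      have step : ‖A - A'‖ * ‖B‖ + ‖A'‖ * ‖B - B'‖
          ≤ α * L₃ * (b^n * ‖θ - θ'‖) * b^n + b * (c * (b^(2*n) - 1) * ‖θ - θ'‖) := by
        have hAA : 0 ≤ α * L₃ * (b^n * ‖θ - θ'‖) := by positivity
        have hcc : 0 ≤ c * (b^(2*n) - 1) * ‖θ - θ'‖ :=
          mul_nonneg (mul_nonneg hc0.le (by linarith)) hnn
        nlinarith [norm_nonneg (A - A'), norm_nonneg (B - B')]
      refine (key.trans step).trans ?_
      have hpow : b^n * b^n = b^(2*n) := by rw [← pow_add, two_mul]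
      have hpow2 : b^(2*(n+1)) = b^(2*n) * b^2 := by rw [← pow_add]; ring_nf
      have hsub : α * L₂ = b - 1 := by rw [hbdef]; ring
      have halc : α * L₃ = c * (b - 1) := by
        rw [hcL, hcdef]
        field_simp
        nlinarith [hsub]
      have coeff : α*L₃*(b^n*b^n) + b*(c*(b^(2*n)-1)) ≤ c*(b^(2*(n+1))-1) := by
        rw [hpow, hpow2, halc]
        nlinarith [mul_nonneg hc0.le (mul_nonneg (pow_nonneg hb0.le (2*n)) (sq_nonneg (b-1))),
          mul_nonneg hc0.le (show (0:ℝ) ≤ b - 1 by linarith)]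
      calc α * L₃ * (b^n * ‖θ - θ'‖) * b^n + b * (c * (b^(2*n) - 1) * ‖θ - θ'‖)
          = (α*L₃*(b^n*b^n) + b*(c*(b^(2*n)-1))) * ‖θ - θ'‖ := by ring
        _ ≤ c*(b^(2*(n+1))-1) * ‖θ - θ'‖ := mul_le_mul_of_nonneg_right coeff hnn

lemma grad_sub_norm {p : ℕ} (f : Vec p → ℝ) (x y : Vec p) :
    ‖gradient f x - gradient f y‖ = ‖fderiv ℝ f x - fderiv ℝ f y‖ := by
  rw [show gradient f x = (InnerProductSpace.toDual ℝ (Vec p)).symm (fderiv ℝ f x) from rfl,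
    show gradient f y = (InnerProductSpace.toDual ℝ (Vec p)).symm (fderiv ℝ f y) from rfl,
    ← map_sub]
  exact (InnerProductSpace.toDual ℝ (Vec p)).symm.norm_map _

lemma norm_fderiv_eq_grad {p : ℕ} (f : Vec p → ℝ) (x : Vec p) :
    ‖fderiv ℝ f x‖ = ‖gradient f x‖ := by
  rw [show gradient f x = (InnerProductSpace.toDual ℝ (Vec p)).symm (fderiv ℝ f x) from rfl]
  exact ((InnerProductSpace.toDual ℝ (Vec p)).symm.norm_map _).symm

/-!
STATEMENT 3 (Lemma 1 of the paper): the gradient of the BLO objective `M` is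
Lipschitz with constant `L₂(1+αL₂)^(2r) + (L₁L₃/L₂)((1+αL₂)^(2r) − 1)`.
-/

set_option maxHeartbeats 1000000 in
theorem objective_gradient_lipschitz
    (p r : ℕ) (α : ℝ) (hα : 0 < α)
    (Ωt : Type*) [Nonempty Ωt] [MeasurableSpace Ωt]
    (μ : Measure Ωt) [IsProbabilityMeasure μ]
    (Lin Lout : Vec p → Ωt → ℝ) (L₁ L₂ L₃ : ℝ)
    (hA1 : Assumption1 p Lin Lout L₁ L₂ L₃)
    (hA2 : Assumption2 p α r μ Lin Lout)
    (θ' θ'' : Vec p) :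
    ‖gradient (Mobj p α r μ Lin Lout) θ' - gradient (Mobj p α r μ Lin Lout) θ''‖
      ≤ (L₂ * (1 + α * L₂) ^ (2 * r)
          + (L₁ * L₃ / L₂) * ((1 + α * L₂) ^ (2 * r) - 1)) * ‖θ' - θ''‖ := by
  obtain ⟨hL₁, hL₂, hL₃, hT⟩ := hA1
  set b := 1 + α * L₂ with hbdef
  have hb1 : (1:ℝ) ≤ b := by nlinarith
  have hb0 : (0:ℝ) < b := by linarith
  set C := L₂ * b ^ (2 * r) + (L₁ * L₃ / L₂) * (b ^ (2 * r) - 1) with hCdef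
  -- pointwise Lipschitz bound on the outer gradient
  have hptwise : ∀ T : Ωt, ‖outerGrad p α r Lin Lout θ' T - outerGrad p α r Lin Lout θ'' T‖
      ≤ C * ‖θ' - θ''‖ := by
    intro T
    obtain ⟨hLinD, hLinGD, hLoutD, hLoutGD, hgb, hHin, hHout, hHlip⟩ := hT T
    obtain ⟨hUd, hUb, hUlipF⟩ := iterate_facts p α hα Lin T L₂ L₃ hL₂ hL₃ hLinGD hHin hHlip r
    have hUlip : ∀ θ θ₂, ‖U p α r Lin θ T - U p α r Lin θ₂ T‖ ≤ b ^ r * ‖θ - θ₂‖ :=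
      lip_of_fderiv_bound hUd hUb
    set f : Vec p → ℝ := fun φ => Lout φ T with hfdef
    have hfd : Differentiable ℝ f := hLoutD
    have hfb : ∀ φ, ‖fderiv ℝ f φ‖ ≤ L₁ := by
      intro φ; rw [norm_fderiv_eq_grad]; exact hgb φ
    have hflip : ∀ φ ψ, ‖fderiv ℝ f φ - fderiv ℝ f ψ‖ ≤ L₂ * ‖φ - ψ‖ := by
      intro φ ψ
      rw [← grad_sub_norm]
      exact lip_of_fderiv_bound hLoutGD hHout φ ψ
    have hcomp : (fun θ => Lout (U p α r Lin θ T) T) = f ∘ (fun θ => U p α r Lin θ T) := rfl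
    have hfU : ∀ θ, fderiv ℝ (fun θ₀ => Lout (U p α r Lin θ₀ T) T) θ
        = (fderiv ℝ f (U p α r Lin θ T)).comp (fderiv ℝ (fun θ₀ => U p α r Lin θ₀ T) θ) := by
      intro θ
      rw [hcomp]
      exact fderiv_comp θ (hfd _) (hUd θ)
    rw [outerGrad, outerGrad, grad_sub_norm, hfU θ', hfU θ'']
    set A := fderiv ℝ f (U p α r Lin θ' T)
    set A' := fderiv ℝ f (U p α r Lin θ'' T)
    set B := fderiv ℝ (fun θ₀ => U p α r Lin θ₀ T) θ'
    set B' := fderiv ℝ (fun θ₀ => U p α r Lin θ₀ T) θ''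
    have key : ‖A.comp B - A'.comp B'‖ ≤ ‖A - A'‖ * ‖B‖ + ‖A'‖ * ‖B - B'‖ := by
      calc ‖A.comp B - A'.comp B'‖
          = ‖(A - A').comp B + A'.comp (B - B')‖ := by
            congr 1
            ext v
            simp [ContinuousLinearMap.sub_comp, ContinuousLinearMap.comp_sub]
        _ ≤ ‖(A - A').comp B‖ + ‖A'.comp (B - B')‖ := norm_add_le _ _
        _ ≤ ‖A - A'‖ * ‖B‖ + ‖A'‖ * ‖B - B'‖ := by
            gcongr <;> exact ContinuousLinearMap.opNorm_comp_le _ _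
    have h1 : ‖A - A'‖ ≤ L₂ * (b ^ r * ‖θ' - θ''‖) :=
      (hflip _ _).trans (mul_le_mul_of_nonneg_left (hUlip θ' θ'') hL₂.le)
    have h2 : ‖B‖ ≤ b ^ r := hUb θ'
    have h3 : ‖A'‖ ≤ L₁ := hfb _
    have h4 : ‖B - B'‖ ≤ (L₃ / L₂) * (b ^ (2 * r) - 1) * ‖θ' - θ''‖ := hUlipF θ' θ''
    have hnn : (0:ℝ) ≤ ‖θ' - θ''‖ := norm_nonneg _
    have hb2r : (1:ℝ) ≤ b ^ (2 * r) := one_le_pow₀ hb1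
    have hpow : b ^ r * b ^ r = b ^ (2 * r) := by rw [← pow_add, two_mul]
    have step : ‖A - A'‖ * ‖B‖ + ‖A'‖ * ‖B - B'‖
        ≤ L₂ * (b ^ r * ‖θ' - θ''‖) * b ^ r + L₁ * ((L₃ / L₂) * (b ^ (2 * r) - 1) * ‖θ' - θ''‖) := by
      have h1nn : 0 ≤ L₂ * (b ^ r * ‖θ' - θ''‖) := by positivity
      have h4nn : 0 ≤ (L₃ / L₂) * (b ^ (2 * r) - 1) * ‖θ' - θ''‖ :=
        mul_nonneg (mul_nonneg (div_pos hL₃ hL₂).le (by linarith)) hnn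
      nlinarith [norm_nonneg (A - A'), norm_nonneg (B - B'), norm_nonneg B, norm_nonneg A',
        pow_nonneg hb0.le r]
    refine (key.trans step).trans (le_of_eq ?_)
    have : L₁ * (L₃ / L₂) = L₁ * L₃ / L₂ := by ring
    calc L₂ * (b ^ r * ‖θ' - θ''‖) * b ^ r
          + L₁ * ((L₃ / L₂) * (b ^ (2 * r) - 1) * ‖θ' - θ''‖)
        = (L₂ * (b ^ r * b ^ r) + (L₁ * L₃ / L₂) * (b ^ (2 * r) - 1)) * ‖θ' - θ''‖ := by ring
      _ = C * ‖θ' - θ''‖ := by rw [hpow]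
  -- integrate the pointwise bound
  obtain ⟨hInt1, hDiff, hIntG, hMdiff, hMgrad, hBdd⟩ := hA2
  rw [hMgrad θ', hMgrad θ'', ← integral_sub (hIntG θ') (hIntG θ'')]
  have := norm_integral_le_of_norm_le_const (μ := μ)
    (f := fun T => outerGrad p α r Lin Lout θ' T - outerGrad p α r Lin Lout θ'' T)
    (C := C * ‖θ' - θ''‖) (Filter.Eventually.of_forall hptwise)
  simpa [measure_univ] using this
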